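/- arXiv:1603.09287 — 2 statements merged into one kernel-verified Lean document; each statement's English description precedes it below -/
import Mathlib

section
/- Let μ₁, μ₂, μ₃ be complex numbers with Re(μ₁) > Re(μ₂) > Re(μ₃), and let n₂ be real. Then ∫_{ℝ³} (1+u₂²+u₃²)^{(-1+μ₃-μ₂)/2} · (1+u₁²+(u₃-u₁u₂)²)^{(-1+μ₂-μ₁)/2} · e(-n₂u₂) du₁du₂du₃ = [ 2^{1-(μ₁-μ₂)} π Γ(μ₁-μ₂) / Γ((1+μ₁-μ₂)/2)² ] · [ 2^{1-(μ₁-μ₃)} π Γ(μ₁-μ₃) / Γ((1+μ₁-μ₃)/2)² ] · ∫_ℝ (1+x²)^{-(1+μ₂-μ₃)/2} e(-n₂x) dx. -/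
open MeasureTheory

namespace Stmt15Aux

open Set

/-- complex power of a positive real, as exponential -/
lemma cpow_pos_real {r : ℝ} (hr : 0 < r) (c : ℂ) :
    (r : ℂ) ^ c = Complex.exp (Real.log r * c) := by
  rw [Complex.cpow_def_of_ne_zero (by exact_mod_cast hr.ne'), ← Complex.ofReal_log hr.le]

lemma norm_cpow_pos_real {r : ℝ} (hr : 0 < r) (c : ℂ) :
    ‖(r : ℂ) ^ c‖ = r ^ c.re := by
  rw [Complex.norm_cpow_eq_rpow_re_of_pos hr]

lemma continuous_ofReal_cpow {X : Type*} [TopologicalSpace X] {g : X → ℝ}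
    (hg : Continuous g) (h0 : ∀ x, 0 < g x) (c : ℂ) :
    Continuous fun x => ((g x : ℝ) : ℂ) ^ c := by
  have : (fun x => ((g x : ℝ) : ℂ) ^ c) = fun x => Complex.exp ((Real.log (g x) : ℂ) * c) := by
    funext x; rw [cpow_pos_real (h0 x)]
  rw [this]
  exact Complex.continuous_exp.comp
    (((Complex.continuous_ofReal.comp (hg.log fun x => (h0 x).ne')).mul continuous_const))

lemma integrable_one_add_sq_rpow {A : ℝ} (hA : A < -(1/2)) :
    Integrable fun t : ℝ => (1 + t ^ 2) ^ A := by
  have hpos : ∀ t : ℝ, (0:ℝ) < 1 + t ^ 2 := fun t => by positivity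
  have hcont : Continuous fun t : ℝ => (1 + t ^ 2) ^ A :=
    (continuous_const.add (continuous_pow 2)).rpow_const fun x => Or.inl (hpos x).ne'
  have hint : Integrable fun t : ℝ => (2:ℝ) ^ (-A) * (1 + ‖t‖) ^ (-(-2*A)) := by
    refine ((integrable_one_add_norm (E := ℝ) ?_).const_mul _)
    simp only [Module.finrank_self, Nat.cast_one]; linarith
  refine hint.mono' hcont.aestronglyMeasurable (Filter.Eventually.of_forall fun t => ?_)
  rw [Real.norm_eq_abs, abs_of_nonneg (Real.rpow_nonneg (hpos t).le _)]
  have h1 : (0:ℝ) < ((1 + |t|) ^ 2) / 2 := by positivity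
  have h2 : ((1 + |t|) ^ 2) / 2 ≤ 1 + t ^ 2 := by nlinarith [sq_nonneg (1 - |t|), sq_abs t]
  calc (1 + t ^ 2) ^ A ≤ (((1 + |t|) ^ 2) / 2) ^ A :=
        Real.rpow_le_rpow_of_nonpos h1 h2 (by linarith)
    _ = (2:ℝ) ^ (-A) * (1 + ‖t‖) ^ (-(-2*A)) := by
        rw [Real.div_rpow (by positivity) (by norm_num), ← Real.rpow_natCast (1 + |t|) 2,
          ← Real.rpow_mul (by positivity), Real.rpow_neg (by norm_num)]
        rw [div_eq_mul_inv, mul_comm]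
        norm_num [Real.norm_eq_abs]

lemma integrable_one_add_sq_cpow {c : ℂ} (hc : c.re < -(1/2)) :
    Integrable fun t : ℝ => ((1 + t ^ 2 : ℝ) : ℂ) ^ c := by
  have hpos : ∀ t : ℝ, (0:ℝ) < 1 + t ^ 2 := fun t => by positivity
  refine (integrable_one_add_sq_rpow hc).mono'
    ((continuous_ofReal_cpow (continuous_const.add (continuous_pow 2)) hpos c).aestronglyMeasurable)
    (Filter.Eventually.of_forall fun t => ?_)
  rw [norm_cpow_pos_real (hpos t)]

lemma integral_even {E : Type*} [NormedAddCommGroup E] [NormedSpace ℝ E]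
    {f : ℝ → E} (hf : Integrable f) (he : ∀ x, f (-x) = f x) :
    ∫ x, f x = (2:ℝ) • ∫ x in Ioi (0:ℝ), f x := by
  have h : ∫ x in Iic (0:ℝ), f x = ∫ x in Ioi (0:ℝ), f x := by
    rw [show Iic (0:ℝ) = Iic (-0) by norm_num, ← integral_comp_neg_Ioi]
    simp_rw [he]
  rw [← integral_add_compl measurableSet_Iic hf, compl_Iic, h, two_smul]

lemma beta_Ioi {p q : ℂ} (hp : 0 < p.re) (hq : 0 < q.re) :
    ∫ s in Ioi (0:ℝ), (s:ℂ) ^ (p-1) * ((1+s : ℝ):ℂ) ^ (-(p+q))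
      = Complex.Gamma p * Complex.Gamma q / Complex.Gamma (p+q) := by
  have himg : (fun x : ℝ => x / (1-x)) '' Ioo 0 1 = Ioi 0 := by
    ext y; constructor
    · rintro ⟨x, ⟨hx0, hx1⟩, rfl⟩
      have h1x : (0:ℝ) < 1 - x := by linarith
      exact div_pos hx0 h1x
    · intro hy
      have hy' : (0:ℝ) < y := hy
      refine ⟨y / (1+y), ⟨by positivity, ?_⟩, ?_⟩
      · rw [div_lt_one (by positivity)]; linarith
      · show y/(1+y) / (1 - y/(1+y)) = y
        rw [show (1:ℝ) - y/(1+y) = 1/(1+y) by field_simp; ring]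
        field_simp
  have hderiv : ∀ x ∈ Ioo (0:ℝ) 1,
      HasDerivWithinAt (fun x : ℝ => x / (1-x)) (((1-x)^2)⁻¹) (Ioo 0 1) x := by
    intro x ⟨hx0, hx1⟩
    have h1x : (0:ℝ) < 1 - x := by linarith
    have := (hasDerivAt_id x).div ((hasDerivAt_const x (1:ℝ)).sub (hasDerivAt_id x)) h1x.ne'
    refine this.hasDerivWithinAt.congr_deriv ?_
    show (1 * (1 - x) - x * (0 - 1)) / (1 - x) ^ 2 = ((1-x)^2)⁻¹
    ring
  have hinj : InjOn (fun x : ℝ => x / (1-x)) (Ioo 0 1) := by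
    rintro a ⟨ha0, ha1⟩ b ⟨hb0, hb1⟩ h
    have h1a : (0:ℝ) < 1 - a := by linarith
    have h1b : (0:ℝ) < 1 - b := by linarith
    field_simp at h
    nlinarith
  rw [← himg, integral_image_eq_integral_abs_deriv_smul measurableSet_Ioo hderiv hinj]
  have key : ∫ x in Ioo (0:ℝ) 1, |((1-x)^2)⁻¹| •
        ((↑(x/(1-x)) : ℂ) ^ (p-1) * ((1 + x/(1-x) : ℝ) : ℂ) ^ (-(p+q)))
      = ∫ x in Ioo (0:ℝ) 1, (x:ℂ) ^ (p-1) * ((1-x : ℝ):ℂ) ^ (q-1) := by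
    refine setIntegral_congr_fun measurableSet_Ioo fun x hx => ?_
    obtain ⟨hx0, hx1⟩ := hx
    have h1x : (0:ℝ) < 1 - x := by linarith
    have e1 : (1:ℝ) + x/(1-x) = (1-x)⁻¹ := by field_simp; ring
    have e2 : (((1-x)^2)⁻¹ : ℝ) = Real.exp ((-2) * Real.log (1-x)) := by
      rw [show (-2:ℝ) * Real.log (1-x) = -(Real.log ((1-x)^2)) by
          rw [Real.log_pow]; push_cast; ring,
        Real.exp_neg, Real.exp_log (by positivity)]
    rw [e1, abs_of_pos (by positivity), Complex.real_smul,
      cpow_pos_real (div_pos hx0 h1x), cpow_pos_real (inv_pos.mpr h1x),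
      cpow_pos_real hx0, cpow_pos_real h1x,
      Real.log_div hx0.ne' h1x.ne', Real.log_inv, e2, Complex.ofReal_exp,
      ← Complex.exp_add, ← Complex.exp_add, ← Complex.exp_add]
    congr 1
    push_cast
    ring
  rw [key]
  have hbeta := Complex.Gamma_mul_Gamma_eq_betaIntegral hp hq
  have hbeta' : Complex.betaIntegral p q = ∫ x in Ioo (0:ℝ) 1, (x:ℂ) ^ (p-1) * ((1-x : ℝ):ℂ) ^ (q-1) := by
    rw [Complex.betaIntegral, intervalIntegral.integral_of_le zero_le_one,
      integral_Ioc_eq_integral_Ioo]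
    push_cast
    rfl
  rw [← hbeta', hbeta]
  have hG : Complex.Gamma (p+q) ≠ 0 := Complex.Gamma_ne_zero_of_re_pos (by
    rw [Complex.add_re]; linarith)
  field_simp

lemma Jc_eq {c : ℂ} (hc : c.re < -(1/2)) :
    (∫ t : ℝ, ((1 + t ^ 2 : ℝ):ℂ) ^ c)
      = (Real.sqrt Real.pi : ℂ) * Complex.Gamma (-c - 1/2) / Complex.Gamma (-c) := by
  have himg : (fun t : ℝ => t ^ 2) '' Ioi 0 = Ioi 0 := by
    ext y; constructor
    · rintro ⟨t, ht, rfl⟩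
      have : (0:ℝ) < t := ht
      exact mem_Ioi.mpr (by positivity)
    · intro hy
      exact ⟨Real.sqrt y, Real.sqrt_pos.mpr hy, Real.sq_sqrt (le_of_lt hy)⟩
  have hderiv : ∀ t ∈ Ioi (0:ℝ),
      HasDerivWithinAt (fun t : ℝ => t ^ 2) (2 * t) (Ioi 0) t := by
    intro t _
    simpa using (hasDerivAt_pow 2 t).hasDerivWithinAt
  have hinj : InjOn (fun t : ℝ => t ^ 2) (Ioi 0) := by
    intro a ha b hb h
    have ha' : (0:ℝ) < a := ha
    have hb' : (0:ℝ) < b := hb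
    simp only at h
    nlinarith
  have himage := integral_image_eq_integral_abs_deriv_smul measurableSet_Ioi hderiv hinj
    (fun s => (s:ℂ) ^ ((1/2:ℂ)-1) * ((1+s : ℝ):ℂ) ^ (-((1/2:ℂ) + (-c-1/2))))
  rw [himg] at himage
  have hbeta := beta_Ioi (p := 1/2) (q := -c-1/2)
    (by norm_num) (by simp [Complex.sub_re, Complex.neg_re]; norm_num; linarith)
  rw [himage] at hbeta
  have hpt : ∫ t in Ioi (0:ℝ), |2*t| •
        (((t^2 : ℝ):ℂ) ^ ((1/2:ℂ)-1) * ((1+t^2 : ℝ):ℂ) ^ (-((1/2:ℂ) + (-c-1/2))))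
      = ∫ t in Ioi (0:ℝ), (2:ℂ) * ((1 + t ^ 2 : ℝ):ℂ) ^ c := by
    refine setIntegral_congr_fun measurableSet_Ioi fun t ht => ?_
    have ht' : (0:ℝ) < t := ht
    have h1 : ((t^2 : ℝ):ℂ) ^ ((1/2:ℂ)-1) = (t:ℂ)⁻¹ := by
      rw [cpow_pos_real (by positivity), show Real.log (t^2) = 2 * Real.log t by
        rw [Real.log_pow]; push_cast; ring]
      rw [show ((2 * Real.log t : ℝ) : ℂ) * ((1/2:ℂ)-1) = -((Real.log t : ℝ) : ℂ) by
        push_cast; ring]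
      rw [Complex.exp_neg, ← Complex.ofReal_exp, Real.exp_log ht']
    have h2 : (-((1/2:ℂ) + (-c-1/2))) = c := by ring
    rw [h1, h2, abs_of_pos (by positivity), Complex.real_smul]
    have htne : (t:ℂ) ≠ 0 := by exact_mod_cast ht'.ne'
    push_cast
    field_simp
  rw [hpt, MeasureTheory.integral_const_mul] at hbeta
  have heven : ∀ x : ℝ, ((1 + (-x) ^ 2 : ℝ):ℂ) ^ c = ((1 + x ^ 2 : ℝ):ℂ) ^ c := by
    intro x; rw [neg_pow]; norm_num
  rw [integral_even (integrable_one_add_sq_cpow hc) heven]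
  have : ((2:ℝ) : ℂ) • (∫ x in Ioi (0:ℝ), ((1 + x ^ 2 : ℝ):ℂ) ^ c)
      = (2:ℂ) * ∫ x in Ioi (0:ℝ), ((1 + x ^ 2 : ℝ):ℂ) ^ c := rfl
  rw [show ((2:ℝ) • (∫ x in Ioi (0:ℝ), ((1 + x ^ 2 : ℝ):ℂ) ^ c) : ℂ)
      = (2:ℂ) * ∫ x in Ioi (0:ℝ), ((1 + x ^ 2 : ℝ):ℂ) ^ c by
    rw [← this]; norm_num]
  rw [hbeta]
  rw [show (1/2 + (-c-1/2) : ℂ) = -c by ring]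
  congr 2
  rw [Complex.Gamma_one_half_eq,
    show ((1/2 : ℂ)) = (((1/2:ℝ)) : ℂ) by norm_num,
    ← Complex.ofReal_cpow Real.pi_pos.le, ← Real.sqrt_eq_rpow]

lemma quad_base {α β : ℝ} (hα : 0 < α) (hβ : 0 < β) (δ t : ℝ) :
    α * (t - δ) ^ 2 + β = β * (1 + (Real.sqrt (α/β) * (t - δ)) ^ 2) := by
  rw [mul_pow, Real.sq_sqrt (div_pos hα hβ).le]
  field_simp
  ring

lemma sqrt_inv_eq {α β : ℝ} : (Real.sqrt (α/β))⁻¹ = Real.sqrt (β/α) := by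
  rw [← Real.sqrt_inv, inv_div]

lemma integrable_quad_cpow {α β δ : ℝ} (hα : 0 < α) (hβ : 0 < β) {c : ℂ}
    (hc : c.re < -(1/2)) :
    Integrable fun t : ℝ => ((α * (t - δ) ^ 2 + β : ℝ) : ℂ) ^ c := by
  set k := Real.sqrt (α/β) with hk
  have hk0 : 0 < k := Real.sqrt_pos.mpr (div_pos hα hβ)
  have heq : (fun t : ℝ => ((α * (t - δ) ^ 2 + β : ℝ) : ℂ) ^ c)
      = fun t : ℝ => (β : ℂ) ^ c * ((1 + (k * (t - δ)) ^ 2 : ℝ) : ℂ) ^ c := by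
    funext t
    rw [quad_base hα hβ δ t, Complex.ofReal_mul,
      Complex.mul_cpow_ofReal_nonneg hβ.le (by positivity) c]
  rw [heq]
  exact (((integrable_one_add_sq_cpow hc).comp_mul_left' hk0.ne').comp_sub_right
    δ).const_mul _

lemma integral_quad_cpow {α β δ : ℝ} (hα : 0 < α) (hβ : 0 < β) (c : ℂ) :
    ∫ t : ℝ, ((α * (t - δ) ^ 2 + β : ℝ) : ℂ) ^ c
      = (Real.sqrt (β/α) : ℂ) * ((β : ℝ) : ℂ) ^ c * ∫ t : ℝ, ((1 + t ^ 2 : ℝ) : ℂ) ^ c := by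
  set k := Real.sqrt (α/β) with hk
  have hk0 : 0 < k := Real.sqrt_pos.mpr (div_pos hα hβ)
  have heq : (fun t : ℝ => ((α * (t - δ) ^ 2 + β : ℝ) : ℂ) ^ c)
      = fun t : ℝ => (β : ℂ) ^ c * ((1 + (k * (t - δ)) ^ 2 : ℝ) : ℂ) ^ c := by
    funext t
    rw [quad_base hα hβ δ t, Complex.ofReal_mul,
      Complex.mul_cpow_ofReal_nonneg hβ.le (by positivity) c]
  rw [heq, MeasureTheory.integral_const_mul]
  have hsub : ∫ t : ℝ, ((1 + (k * (t - δ)) ^ 2 : ℝ) : ℂ) ^ c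
      = ∫ t : ℝ, ((1 + (k * t) ^ 2 : ℝ) : ℂ) ^ c :=
    integral_sub_right_eq_self (fun t : ℝ => ((1 + (k * t) ^ 2 : ℝ) : ℂ) ^ c) δ
  rw [hsub, Measure.integral_comp_mul_left (fun t : ℝ => ((1 + t ^ 2 : ℝ) : ℂ) ^ c) k,
    abs_of_pos (inv_pos.mpr hk0), hk, sqrt_inv_eq]
  rw [Complex.real_smul]
  ring

lemma integrable_quad_rpow {α β δ : ℝ} (hα : 0 < α) (hβ : 0 < β) {A : ℝ}
    (hA : A < -(1/2)) :
    Integrable fun t : ℝ => (α * (t - δ) ^ 2 + β) ^ A := by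
  set k := Real.sqrt (α/β) with hk
  have hk0 : 0 < k := Real.sqrt_pos.mpr (div_pos hα hβ)
  have heq : (fun t : ℝ => (α * (t - δ) ^ 2 + β) ^ A)
      = fun t : ℝ => β ^ A * (1 + (k * (t - δ)) ^ 2) ^ A := by
    funext t
    rw [quad_base hα hβ δ t, Real.mul_rpow hβ.le (by positivity)]
  rw [heq]
  exact (((integrable_one_add_sq_rpow hA).comp_mul_left' hk0.ne').comp_sub_right
    δ).const_mul _

lemma integral_quad_rpow {α β δ : ℝ} (hα : 0 < α) (hβ : 0 < β) (A : ℝ) :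
    ∫ t : ℝ, (α * (t - δ) ^ 2 + β) ^ A
      = Real.sqrt (β/α) * β ^ A * ∫ t : ℝ, (1 + t ^ 2) ^ A := by
  set k := Real.sqrt (α/β) with hk
  have hk0 : 0 < k := Real.sqrt_pos.mpr (div_pos hα hβ)
  have heq : (fun t : ℝ => (α * (t - δ) ^ 2 + β) ^ A)
      = fun t : ℝ => β ^ A * (1 + (k * (t - δ)) ^ 2) ^ A := by
    funext t
    rw [quad_base hα hβ δ t, Real.mul_rpow hβ.le (by positivity)]
  rw [heq, MeasureTheory.integral_const_mul]
  have hsub : ∫ t : ℝ, (1 + (k * (t - δ)) ^ 2) ^ A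
      = ∫ t : ℝ, (1 + (k * t) ^ 2) ^ A :=
    integral_sub_right_eq_self (fun t : ℝ => (1 + (k * t) ^ 2) ^ A) δ
  rw [hsub, Measure.integral_comp_mul_left (fun t : ℝ => (1 + t ^ 2) ^ A) k,
    abs_of_pos (inv_pos.mpr hk0), hk, sqrt_inv_eq]
  rw [smul_eq_mul]
  ring

lemma integrable_2d {P Q : ℝ} (hQ : Q < -(1/2)) (hPQ : P + Q + 1/2 < -(1/2)) :
    Integrable (fun w : ℝ × ℝ => (1 + w.1 ^ 2) ^ P * (1 + w.1 ^ 2 + w.2 ^ 2) ^ Q) := by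
  have hc1 : Continuous fun w : ℝ × ℝ => (1 + w.1 ^ 2) ^ P :=
    (continuous_const.add ((continuous_fst.pow 2))).rpow_const
      (fun w => Or.inl (by simp only [Pi.add_apply, Pi.pow_apply]; positivity))
  have hc2 : Continuous fun w : ℝ × ℝ => (1 + w.1 ^ 2 + w.2 ^ 2) ^ Q :=
    ((continuous_const.add (continuous_fst.pow 2)).add (continuous_snd.pow 2)).rpow_const
      (fun w => Or.inl (by simp only [Pi.add_apply, Pi.pow_apply]; positivity))
  rw [show (volume : Measure (ℝ × ℝ)) = (volume : Measure ℝ).prod volume from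
    (Measure.volume_eq_prod ℝ ℝ)]
  rw [integrable_prod_iff (f := fun w : ℝ × ℝ => (1 + w.1 ^ 2) ^ P * (1 + w.1 ^ 2 + w.2 ^ 2) ^ Q) ((hc1.mul hc2).aestronglyMeasurable)]
  constructor
  · refine Filter.Eventually.of_forall fun x => ?_
    have h := (integrable_quad_rpow one_pos (show (0:ℝ) < 1 + x ^ 2 by positivity)
      (δ := 0) hQ).const_mul ((1 + x ^ 2) ^ P)
    refine h.congr (Filter.Eventually.of_forall fun y => ?_)
    show (1 + x ^ 2) ^ P * ((1:ℝ) * (y - 0) ^ 2 + (1 + x ^ 2)) ^ Q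
        = (1 + x ^ 2) ^ P * (1 + x ^ 2 + y ^ 2) ^ Q
    have : (1:ℝ) * (y - 0) ^ 2 + (1 + x ^ 2) = 1 + x ^ 2 + y ^ 2 := by ring
    rw [this]
  · have hval : (fun x : ℝ => ∫ y : ℝ, ‖(1 + x ^ 2) ^ P * (1 + x ^ 2 + y ^ 2) ^ Q‖)
        = fun x : ℝ => (∫ t : ℝ, (1 + t ^ 2) ^ Q) * (1 + x ^ 2) ^ (P + Q + 1/2) := by
      funext x
      have hx : (0:ℝ) < 1 + x ^ 2 := by positivity
      have h1 : ∀ y : ℝ, ‖(1 + x ^ 2) ^ P * (1 + x ^ 2 + y ^ 2) ^ Q‖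
          = (1 + x ^ 2) ^ P * ((1:ℝ) * (y - 0) ^ 2 + (1 + x ^ 2)) ^ Q := by
        intro y
        rw [Real.norm_eq_abs, abs_of_nonneg (by positivity)]
        congr 1
        ring_nf
      simp_rw [h1]
      rw [MeasureTheory.integral_const_mul, integral_quad_rpow one_pos hx Q, div_one,
        Real.sqrt_eq_rpow, show P + Q + (1/2:ℝ) = P + (1/2 + Q) by ring,
        Real.rpow_add hx, Real.rpow_add hx]
      ring
    rw [hval]
    exact (integrable_one_add_sq_rpow (by linarith)).const_mul _

lemma re_div_two (z : ℂ) : (z/2).re = z.re/2 := by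
  rw [show (2:ℂ) = ((2:ℝ):ℂ) by norm_num, Complex.div_ofReal_re]

lemma whittaker_const {u : ℂ} (hu : 0 < u.re) :
    (∫ t : ℝ, ((1 + t ^ 2 : ℝ):ℂ) ^ (-(1+u)/2))
      = (2:ℂ) ^ (1-u) * (Real.pi : ℂ) * Complex.Gamma u / Complex.Gamma ((1+u)/2) ^ 2 := by
  have hre : (-(1+u)/2).re < -(1/2) := by
    rw [re_div_two]
    simp only [Complex.neg_re, Complex.add_re, Complex.one_re]
    linarith
  rw [Jc_eq hre, show -(-(1+u)/2) - 1/2 = u/2 by ring, show -(-(1+u)/2) = (1+u)/2 by ring]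
  have hdup := Complex.Gamma_mul_Gamma_add_half (u/2)
  rw [show u/2 + 1/2 = (1+u)/2 by ring, show 2*(u/2) = u by ring] at hdup
  have hne : Complex.Gamma ((1+u)/2) ≠ 0 := Complex.Gamma_ne_zero_of_re_pos (by
    rw [re_div_two]; simp only [Complex.add_re, Complex.one_re]; linarith)
  have hpi : ((Real.pi : ℝ):ℂ) = (Real.sqrt Real.pi : ℂ) * (Real.sqrt Real.pi : ℂ) := by
    rw [← Complex.ofReal_mul, Real.mul_self_sqrt Real.pi_pos.le]
  field_simp
  linear_combination ((Real.sqrt Real.pi : ℂ)) * hdup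
    - (2:ℂ) ^ (1-u) * Complex.Gamma u * hpi

lemma ofReal_sqrt_exp {x : ℝ} (hx : 0 < x) :
    ((Real.sqrt x : ℝ) : ℂ) = Complex.exp ((Real.log x : ℝ) * (1/2 : ℂ)) := by
  rw [Real.sqrt_eq_rpow, Real.rpow_def_of_pos hx, Complex.ofReal_exp]
  congr 1
  push_cast
  ring

lemma cpow_collect1 {r s : ℝ} (hr : 0 < r) (hs : 0 < s) (E J a b : ℂ) :
    (s:ℂ) ^ a * E * ((Real.sqrt ((s/r)/r) : ℂ) * (((s/r) : ℝ):ℂ) ^ b * J)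
      = J * E * ((r:ℂ) ^ (-1-b) * (s:ℂ) ^ (a+b+1/2)) := by
  have hsr : (0:ℝ) < s/r := div_pos hs hr
  have hsrr : (0:ℝ) < (s/r)/r := div_pos hsr hr
  rw [ofReal_sqrt_exp hsrr, cpow_pos_real hs a, cpow_pos_real hsr b,
    cpow_pos_real hr (-1-b), cpow_pos_real hs (a+b+1/2),
    Real.log_div hsr.ne' hr.ne', Real.log_div hs.ne' hr.ne']
  push_cast
  trans Complex.exp (((Real.log s : ℝ):ℂ) * a
      + (((Real.log s : ℝ):ℂ) - ((Real.log r : ℝ):ℂ) - ((Real.log r : ℝ):ℂ)) * (1/2)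
      + (((Real.log s : ℝ):ℂ) - ((Real.log r : ℝ):ℂ)) * b) * (E * J)
  · rw [Complex.exp_add, Complex.exp_add]; ring
  · rw [show ((Real.log s : ℝ):ℂ) * a
        + (((Real.log s : ℝ):ℂ) - ((Real.log r : ℝ):ℂ) - ((Real.log r : ℝ):ℂ)) * (1/2)
        + (((Real.log s : ℝ):ℂ) - ((Real.log r : ℝ):ℂ)) * b
        = ((Real.log r : ℝ):ℂ) * (-1-b) + ((Real.log s : ℝ):ℂ) * (a+b+1/2) by ring,
      Complex.exp_add]
    ring

lemma cpow_collect2 {r : ℝ} (hr : 0 < r) (E Jb Jab a b : ℂ) :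
    Jb * E * ((r:ℂ) ^ (-1-b)) * ((Real.sqrt r : ℂ) * (r:ℂ) ^ (a+b+1/2) * Jab)
      = Jb * Jab * ((r:ℂ) ^ a * E) := by
  rw [ofReal_sqrt_exp hr, cpow_pos_real hr (-1-b), cpow_pos_real hr (a+b+1/2),
    cpow_pos_real hr a]
  trans Complex.exp (((Real.log r : ℝ):ℂ) * (-1-b) + ((Real.log r : ℝ):ℂ) * (1/2)
      + ((Real.log r : ℝ):ℂ) * (a+b+1/2)) * (Jb * Jab * E)
  · rw [Complex.exp_add, Complex.exp_add]; ring
  · rw [show ((Real.log r : ℝ):ℂ) * (-1-b) + ((Real.log r : ℝ):ℂ) * (1/2)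
        + ((Real.log r : ℝ):ℂ) * (a+b+1/2) = ((Real.log r : ℝ):ℂ) * a by ring]
    ring

end Stmt15Aux

open Stmt15Aux

/-- The spherical long-element Jacquet–Whittaker integral at the degenerate character
`ψ_{(0,n₂)}` factors as `𝒲₀(0,μ₁−μ₂)·𝒲₀(0,μ₁−μ₃)·𝒲₀(n₂,μ₂−μ₃)`, for
`Re μ₁ > Re μ₂ > Re μ₃`. Here `u = (u₁, u₂, u₃)` and `e(t) = exp(2πit)`. -/
theorem stmt_15 (μ₁ μ₂ μ₃ : ℂ) (h12 : μ₂.re < μ₁.re) (h23 : μ₃.re < μ₂.re) (n₂ : ℝ) :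
    (∫ u : ℝ × ℝ × ℝ,
        ((1 + u.2.1 ^ 2 + u.2.2 ^ 2 : ℝ) : ℂ) ^ ((-1 + μ₃ - μ₂) / 2) *
          ((1 + u.1 ^ 2 + (u.2.2 - u.1 * u.2.1) ^ 2 : ℝ) : ℂ) ^ ((-1 + μ₂ - μ₁) / 2) *
          Complex.exp (2 * (Real.pi : ℂ) * Complex.I * ((-n₂ * u.2.1 : ℝ) : ℂ)))
      = ((2 : ℂ) ^ (1 - (μ₁ - μ₂)) * (Real.pi : ℂ) * Complex.Gamma (μ₁ - μ₂) /
            Complex.Gamma ((1 + μ₁ - μ₂) / 2) ^ 2) *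
          ((2 : ℂ) ^ (1 - (μ₁ - μ₃)) * (Real.pi : ℂ) * Complex.Gamma (μ₁ - μ₃) /
            Complex.Gamma ((1 + μ₁ - μ₃) / 2) ^ 2) *
          ∫ x : ℝ, ((1 + x ^ 2 : ℝ) : ℂ) ^ (-(1 + μ₂ - μ₃) / 2) *
            Complex.exp (2 * (Real.pi : ℂ) * Complex.I * ((-n₂ * x : ℝ) : ℂ)) := by
  set a : ℂ := (-1 + μ₃ - μ₂) / 2 with ha
  set b : ℂ := (-1 + μ₂ - μ₁) / 2 with hb
  set E : ℝ → ℂ := fun x => Complex.exp (2 * (Real.pi : ℂ) * Complex.I * ((-n₂ * x : ℝ) : ℂ))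
    with hEdef
  show (∫ u : ℝ × ℝ × ℝ,
        ((1 + u.2.1 ^ 2 + u.2.2 ^ 2 : ℝ) : ℂ) ^ a *
          ((1 + u.1 ^ 2 + (u.2.2 - u.1 * u.2.1) ^ 2 : ℝ) : ℂ) ^ b * E u.2.1)
      = ((2 : ℂ) ^ (1 - (μ₁ - μ₂)) * (Real.pi : ℂ) * Complex.Gamma (μ₁ - μ₂) /
            Complex.Gamma ((1 + μ₁ - μ₂) / 2) ^ 2) *
          ((2 : ℂ) ^ (1 - (μ₁ - μ₃)) * (Real.pi : ℂ) * Complex.Gamma (μ₁ - μ₃) /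
            Complex.Gamma ((1 + μ₁ - μ₃) / 2) ^ 2) *
          ∫ x : ℝ, ((1 + x ^ 2 : ℝ) : ℂ) ^ (-(1 + μ₂ - μ₃) / 2) * E x
  have har : a.re < -(1/2) := by
    rw [ha, re_div_two]
    simp only [Complex.add_re, Complex.sub_re, Complex.neg_re, Complex.one_re]
    linarith
  have hbr : b.re < -(1/2) := by
    rw [hb, re_div_two]
    simp only [Complex.add_re, Complex.sub_re, Complex.neg_re, Complex.one_re]
    linarith
  have habr : (a + b + 1/2).re = a.re + b.re + 1/2 := by
    simp only [Complex.add_re]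
    rw [show ((1:ℂ)/2).re = 1/2 by rw [re_div_two]; simp]
  have habr' : (a + b + 1/2).re < -(1/2) := by
    rw [habr]; linarith
  have hE1 : ∀ x : ℝ, ‖E x‖ = 1 := by
    intro x
    rw [hEdef]
    simp only [Complex.norm_exp]
    rw [show (2 * (Real.pi : ℂ) * Complex.I * ((-n₂ * x : ℝ) : ℂ)).re = 0 by simp]
    exact Real.exp_zero
  have hquad : ∀ u₂ u₃ u₁ : ℝ, (1 + u₁ ^ 2 + (u₃ - u₁ * u₂) ^ 2 : ℝ)
      = (1 + u₂ ^ 2) * (u₁ - u₂ * u₃ / (1 + u₂ ^ 2)) ^ 2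
        + (1 + u₂ ^ 2 + u₃ ^ 2) / (1 + u₂ ^ 2) := by
    intro u₂ u₃ u₁
    have h : (1 + u₂ ^ 2 : ℝ) ≠ 0 := by positivity
    field_simp
    ring
  have hβpos : ∀ u₂ u₃ : ℝ, (0:ℝ) < (1 + u₂ ^ 2 + u₃ ^ 2) / (1 + u₂ ^ 2) := by
    intro u₂ u₃; positivity
  have hEc : Continuous E := by
    rw [hEdef]; fun_prop
  set g : (ℝ × ℝ) × ℝ → ℂ := fun w =>
    ((1 + w.1.1 ^ 2 + w.1.2 ^ 2 : ℝ) : ℂ) ^ a *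
      ((1 + w.2 ^ 2 + (w.1.2 - w.2 * w.1.1) ^ 2 : ℝ) : ℂ) ^ b * E w.1.1 with hgdef
  have hgc : Continuous g := by
    rw [hgdef]
    exact ((continuous_ofReal_cpow (by fun_prop) (fun w => by positivity) a).mul
      (continuous_ofReal_cpow (by fun_prop) (fun w => by positivity) b)).mul
      (hEc.comp (continuous_fst.comp continuous_fst))
  have hg : Integrable g (((volume : Measure (ℝ × ℝ))).prod (volume : Measure ℝ)) := by
    rw [integrable_prod_iff hgc.aestronglyMeasurable]
    constructor
    · refine Filter.Eventually.of_forall fun x => ?_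
      obtain ⟨u₂, u₃⟩ := x
      have hα : (0:ℝ) < 1 + u₂ ^ 2 := by positivity
      have h := (integrable_quad_cpow hα (hβpos u₂ u₃) (δ := u₂ * u₃ / (1 + u₂ ^ 2))
        hbr).const_mul (((1 + u₂ ^ 2 + u₃ ^ 2 : ℝ) : ℂ) ^ a * E u₂)
      refine h.congr (Filter.Eventually.of_forall fun u₁ => ?_)
      show ((1 + u₂ ^ 2 + u₃ ^ 2 : ℝ) : ℂ) ^ a * E u₂ *
          (((1 + u₂ ^ 2) * (u₁ - u₂ * u₃ / (1 + u₂ ^ 2)) ^ 2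
            + (1 + u₂ ^ 2 + u₃ ^ 2) / (1 + u₂ ^ 2) : ℝ) : ℂ) ^ b
        = ((1 + u₂ ^ 2 + u₃ ^ 2 : ℝ) : ℂ) ^ a *
          ((1 + u₁ ^ 2 + (u₃ - u₁ * u₂) ^ 2 : ℝ) : ℂ) ^ b * E u₂
      rw [hquad u₂ u₃ u₁]
      ring
    · have hval : (fun x : ℝ × ℝ => ∫ y : ℝ, ‖g (x, y)‖)
          = fun x : ℝ × ℝ => (∫ t : ℝ, (1 + t ^ 2) ^ b.re) *
            ((1 + x.1 ^ 2) ^ (-1 - b.re) * (1 + x.1 ^ 2 + x.2 ^ 2) ^ (a.re + b.re + 1/2)) := by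
        funext x
        obtain ⟨u₂, u₃⟩ := x
        have hr : (0:ℝ) < 1 + u₂ ^ 2 := by positivity
        have hs : (0:ℝ) < 1 + u₂ ^ 2 + u₃ ^ 2 := by positivity
        have hnorm : ∀ y : ℝ, ‖g ((u₂, u₃), y)‖
            = (1 + u₂ ^ 2 + u₃ ^ 2) ^ a.re *
              ((1 + u₂ ^ 2) * (y - u₂ * u₃ / (1 + u₂ ^ 2)) ^ 2
                + (1 + u₂ ^ 2 + u₃ ^ 2) / (1 + u₂ ^ 2)) ^ b.re := by
          intro y
          show ‖((1 + u₂ ^ 2 + u₃ ^ 2 : ℝ) : ℂ) ^ a *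
            ((1 + y ^ 2 + (u₃ - y * u₂) ^ 2 : ℝ) : ℂ) ^ b * E u₂‖ = _
          rw [norm_mul, norm_mul, hE1, mul_one, norm_cpow_pos_real hs,
            norm_cpow_pos_real (show (0:ℝ) < 1 + y ^ 2 + (u₃ - y * u₂) ^ 2 by positivity),
            hquad u₂ u₃ y]
        simp only [hnorm]
        rw [MeasureTheory.integral_const_mul, integral_quad_rpow hr (hβpos u₂ u₃) b.re]
        have e1 : Real.sqrt (((1 + u₂ ^ 2 + u₃ ^ 2) / (1 + u₂ ^ 2)) / (1 + u₂ ^ 2))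
            = (1 + u₂ ^ 2 + u₃ ^ 2) ^ (1/2 : ℝ) * (1 + u₂ ^ 2)⁻¹ := by
          rw [show ((1 + u₂ ^ 2 + u₃ ^ 2) / (1 + u₂ ^ 2)) / (1 + u₂ ^ 2)
              = (1 + u₂ ^ 2 + u₃ ^ 2) / (1 + u₂ ^ 2) ^ 2 by rw [div_div, ← pow_two],
            Real.sqrt_div hs.le, Real.sqrt_sq hr.le, Real.sqrt_eq_rpow, div_eq_mul_inv]
        have e2 : ((1 + u₂ ^ 2 + u₃ ^ 2) / (1 + u₂ ^ 2)) ^ b.re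
            = (1 + u₂ ^ 2 + u₃ ^ 2) ^ b.re * ((1 + u₂ ^ 2) ^ b.re)⁻¹ := by
          rw [Real.div_rpow hs.le hr.le, div_eq_mul_inv]
        rw [e1, e2, ← Real.rpow_neg_one (1 + u₂ ^ 2), ← Real.rpow_neg hr.le,
          show (-1 : ℝ) - b.re = -1 + -b.re by ring,
          show a.re + b.re + (1/2 : ℝ) = a.re + (1/2 + b.re) by ring,
          Real.rpow_add hr, Real.rpow_add hs, Real.rpow_add hs]
        ring
      rw [hval]
      have hQ : a.re + b.re + 1/2 < -(1/2) := by linarith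
      have hPQ : (-1 - b.re) + (a.re + b.re + 1/2) + 1/2 < -(1/2) := by linarith
      exact (integrable_2d hQ hPQ).const_mul _
  -- swap coordinates
  have hfm : AEStronglyMeasurable
      (fun u : ℝ × ℝ × ℝ =>
        ((1 + u.2.1 ^ 2 + u.2.2 ^ 2 : ℝ) : ℂ) ^ a *
          ((1 + u.1 ^ 2 + (u.2.2 - u.1 * u.2.1) ^ 2 : ℝ) : ℂ) ^ b * E u.2.1)
      (Measure.map Prod.swap (((volume : Measure (ℝ × ℝ))).prod (volume : Measure ℝ))) := by
    refine Continuous.aestronglyMeasurable ?_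
    exact ((continuous_ofReal_cpow (by fun_prop) (fun w => by positivity) a).mul
      (continuous_ofReal_cpow (by fun_prop) (fun w => by positivity) b)).mul
      (hEc.comp (continuous_fst.comp continuous_snd))
  have hswap : (∫ u : ℝ × ℝ × ℝ,
        ((1 + u.2.1 ^ 2 + u.2.2 ^ 2 : ℝ) : ℂ) ^ a *
          ((1 + u.1 ^ 2 + (u.2.2 - u.1 * u.2.1) ^ 2 : ℝ) : ℂ) ^ b * E u.2.1)
      = ∫ w, g w ∂(((volume : Measure (ℝ × ℝ))).prod (volume : Measure ℝ)) := by
    calc (∫ u : ℝ × ℝ × ℝ,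
        ((1 + u.2.1 ^ 2 + u.2.2 ^ 2 : ℝ) : ℂ) ^ a *
          ((1 + u.1 ^ 2 + (u.2.2 - u.1 * u.2.1) ^ 2 : ℝ) : ℂ) ^ b * E u.2.1)
        = ∫ u, (((1 + u.2.1 ^ 2 + u.2.2 ^ 2 : ℝ) : ℂ) ^ a *
            ((1 + u.1 ^ 2 + (u.2.2 - u.1 * u.2.1) ^ 2 : ℝ) : ℂ) ^ b * E u.2.1)
            ∂(Measure.map Prod.swap (((volume : Measure (ℝ × ℝ))).prod (volume : Measure ℝ))) := by
          rw [Measure.prod_swap]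
          rfl
      _ = ∫ w, g w ∂(((volume : Measure (ℝ × ℝ))).prod (volume : Measure ℝ)) := by
          rw [MeasureTheory.integral_map measurable_swap.aemeasurable hfm]
          rfl
  rw [hswap, MeasureTheory.integral_prod _ hg]
  set Jb : ℂ := ∫ t : ℝ, ((1 + t ^ 2 : ℝ) : ℂ) ^ b with hJb
  set Jab : ℂ := ∫ t : ℝ, ((1 + t ^ 2 : ℝ) : ℂ) ^ (a + b + 1/2) with hJab
  set H : ℝ × ℝ → ℂ := fun x =>
    Jb * E x.1 * (((1 + x.1 ^ 2 : ℝ) : ℂ) ^ (-1-b) *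
      ((1 + x.1 ^ 2 + x.2 ^ 2 : ℝ) : ℂ) ^ (a + b + 1/2)) with hHdef
  have hinner : (fun x : ℝ × ℝ => ∫ y : ℝ, g (x, y)) = H := by
    funext x
    obtain ⟨u₂, u₃⟩ := x
    have hr : (0:ℝ) < 1 + u₂ ^ 2 := by positivity
    have hs : (0:ℝ) < 1 + u₂ ^ 2 + u₃ ^ 2 := by positivity
    have h1 : (fun u₁ : ℝ => g ((u₂, u₃), u₁)) = fun u₁ : ℝ =>
        (((1 + u₂ ^ 2 + u₃ ^ 2 : ℝ) : ℂ) ^ a * E u₂) *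
          (((1 + u₂ ^ 2) * (u₁ - u₂ * u₃ / (1 + u₂ ^ 2)) ^ 2
            + (1 + u₂ ^ 2 + u₃ ^ 2) / (1 + u₂ ^ 2) : ℝ) : ℂ) ^ b := by
      funext u₁
      show ((1 + u₂ ^ 2 + u₃ ^ 2 : ℝ) : ℂ) ^ a *
          ((1 + u₁ ^ 2 + (u₃ - u₁ * u₂) ^ 2 : ℝ) : ℂ) ^ b * E u₂ = _
      rw [hquad u₂ u₃ u₁]
      ring
    show (∫ u₁ : ℝ, g ((u₂, u₃), u₁)) = Jb * E u₂ * (((1 + u₂ ^ 2 : ℝ) : ℂ) ^ (-1-b) *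
      ((1 + u₂ ^ 2 + u₃ ^ 2 : ℝ) : ℂ) ^ (a + b + 1/2))
    rw [h1, MeasureTheory.integral_const_mul, integral_quad_cpow hr (hβpos u₂ u₃) b]
    exact cpow_collect1 hr hs (E u₂) Jb a b
  rw [hinner]
  have hHint : Integrable H ((volume : Measure ℝ).prod (volume : Measure ℝ)) := by
    have := hg.integral_prod_left
    rw [hinner] at this
    exact this
  rw [show (volume : Measure (ℝ × ℝ)) = (volume : Measure ℝ).prod (volume : Measure ℝ) from
    Measure.volume_eq_prod ℝ ℝ, MeasureTheory.integral_prod _ hHint]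
  have houter : (fun u₂ : ℝ => ∫ u₃ : ℝ, H (u₂, u₃))
      = fun u₂ : ℝ => Jb * Jab * (((1 + u₂ ^ 2 : ℝ) : ℂ) ^ a * E u₂) := by
    funext u₂
    have hr : (0:ℝ) < 1 + u₂ ^ 2 := by positivity
    have h1 : (fun u₃ : ℝ => H (u₂, u₃)) = fun u₃ : ℝ =>
        (Jb * E u₂ * ((1 + u₂ ^ 2 : ℝ) : ℂ) ^ (-1-b)) *
          ((1 * (u₃ - 0) ^ 2 + (1 + u₂ ^ 2) : ℝ) : ℂ) ^ (a + b + 1/2) := by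
      funext u₃
      show Jb * E u₂ * (((1 + u₂ ^ 2 : ℝ) : ℂ) ^ (-1-b) *
          ((1 + u₂ ^ 2 + u₃ ^ 2 : ℝ) : ℂ) ^ (a + b + 1/2)) = _
      rw [show (1 * (u₃ - 0) ^ 2 + (1 + u₂ ^ 2) : ℝ) = 1 + u₂ ^ 2 + u₃ ^ 2 by ring]
      ring
    show (∫ u₃ : ℝ, H (u₂, u₃)) = _
    rw [h1, MeasureTheory.integral_const_mul, integral_quad_cpow one_pos hr (a + b + 1/2),
      div_one]
    exact cpow_collect2 hr (E u₂) Jb Jab a b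
  rw [houter]
  rw [MeasureTheory.integral_const_mul]
  have hJb' : Jb = (2 : ℂ) ^ (1 - (μ₁ - μ₂)) * (Real.pi : ℂ) * Complex.Gamma (μ₁ - μ₂) /
      Complex.Gamma ((1 + μ₁ - μ₂) / 2) ^ 2 := by
    have h := whittaker_const (u := μ₁ - μ₂) (by simp only [Complex.sub_re]; linarith)
    rw [show (-(1 + (μ₁ - μ₂)) / 2 : ℂ) = b from by rw [hb]; ring,
      show ((1 + (μ₁ - μ₂)) / 2 : ℂ) = (1 + μ₁ - μ₂) / 2 from by ring] at h
    rw [hJb, h]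
  have hJab' : Jab = (2 : ℂ) ^ (1 - (μ₁ - μ₃)) * (Real.pi : ℂ) * Complex.Gamma (μ₁ - μ₃) /
      Complex.Gamma ((1 + μ₁ - μ₃) / 2) ^ 2 := by
    have h := whittaker_const (u := μ₁ - μ₃) (by simp only [Complex.sub_re]; linarith)
    rw [show (-(1 + (μ₁ - μ₃)) / 2 : ℂ) = a + b + 1/2 from by rw [ha, hb]; ring,
      show ((1 + (μ₁ - μ₃)) / 2 : ℂ) = (1 + μ₁ - μ₃) / 2 from by ring] at h
    rw [hJab, h]
  rw [hJb', hJab', show a = -(1 + μ₂ - μ₃) / 2 from by rw [ha]; ring]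
end

section
/- Let μ₁, μ₂, μ₃ be complex numbers with μ₁ + μ₂ + μ₃ = 0, Re(μ₂ - μ₃) > 0, and Re(μ₁ - μ₃) > 0, and let n₂ be real. Then ∫_{ℝ²} ( √(1+u₂²) / (1+u₂²+u₃²) )^{1-μ₃} · ( √(1+u₂²+u₃²) / (1+u₂²) )^{1+μ₁} · e(-n₂u₂) du₂du₃ = [ 2^{1-(μ₂-μ₃)} π Γ(μ₂-μ₃) / Γ((1+μ₂-μ₃)/2)² ] · ∫_ℝ (1+x²)^{-(1+μ₁-μ₃)/2} e(-n₂x) dx, and both integrals converge absolutely. -/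
open MeasureTheory
open Set

lemma integrable_one_add_sq_rpow {q : ℝ} (hq : q < -(1/2)) :
    Integrable (fun x : ℝ => (1 + x ^ 2) ^ q) := by
  have hc : Continuous fun x : ℝ => (1 + x ^ 2) ^ q := by
    apply Continuous.rpow_const (by continuity)
    intro x; left; positivity
  have key : IntegrableOn (fun x : ℝ => (1 + x ^ 2) ^ q) (Ioi 1) := by
    have h1 : IntegrableOn (fun x : ℝ => x ^ (2*q)) (Ioi 1) :=
      integrableOn_Ioi_rpow_of_lt (by linarith) one_pos
    refine Integrable.mono' h1 (hc.aestronglyMeasurable.restrict) ?_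
    filter_upwards [ae_restrict_mem measurableSet_Ioi] with x hx
    have hx1 : (1:ℝ) < x := hx
    rw [Real.norm_eq_abs, abs_of_pos (by positivity)]
    calc (1 + x ^ 2) ^ q ≤ (x ^ 2) ^ q :=
          Real.rpow_le_rpow_of_nonpos (by positivity) (by nlinarith) (by linarith)
      _ = x ^ (2*q) := by
          rw [← Real.rpow_natCast x 2, ← Real.rpow_mul (by linarith)]; norm_num
  have keyneg : IntegrableOn (fun x : ℝ => (1 + x ^ 2) ^ q) (Iic (-1)) := by
    have hemb : MeasurableEmbedding (fun x : ℝ => -x) :=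
      (Homeomorph.neg ℝ).measurableEmbedding
    have : IntegrableOn (fun x : ℝ => (1 + x ^ 2) ^ q) (Iic (-1))
        (Measure.map (fun x : ℝ => -x) volume) := by
      rw [hemb.integrableOn_map_iff]
      have : (fun x : ℝ => -x) ⁻¹' (Iic (-1)) = Ici 1 := by
        ext x; simp
      rw [this]
      rw [integrableOn_Ici_iff_integrableOn_Ioi]
      have hcomp : ((fun x : ℝ => (1 + x ^ 2) ^ q) ∘ fun x : ℝ => -x) = fun x : ℝ => (1 + x ^ 2) ^ q := by
        ext x; simp [Function.comp]
      rw [hcomp]; exact key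
    rwa [Measure.map_neg_eq_self] at this
  have keymid : IntegrableOn (fun x : ℝ => (1 + x ^ 2) ^ q) (Icc (-1) 1) :=
    hc.continuousOn.integrableOn_compact isCompact_Icc
  have : IntegrableOn (fun x : ℝ => (1 + x ^ 2) ^ q) (Iic (-1) ∪ (Icc (-1) 1 ∪ Ioi 1)) :=
    keyneg.union (keymid.union key)
  rw [← integrableOn_univ]
  have hsets : Iic (-1:ℝ) ∪ (Icc (-1) 1 ∪ Ioi 1) = univ := by
    ext x
    simp only [mem_union, mem_Iic, mem_Icc, mem_Ioi, mem_univ, iff_true]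
    by_cases h : x ≤ -1
    · exact Or.inl h
    · by_cases h2 : x ≤ 1
      · exact Or.inr (Or.inl ⟨by linarith, h2⟩)
      · exact Or.inr (Or.inr (by linarith))
  rwa [hsets] at this

lemma re_div_two (z : ℂ) : (z/2).re = z.re/2 := by
  have h2 : (2:ℂ) = ((2:ℝ):ℂ) := by norm_num
  rw [h2, Complex.div_ofReal_re]

lemma cpow_pos_exp {r : ℝ} (hr : 0 < r) (w : ℂ) :
    (r : ℂ) ^ w = Complex.exp (w * Real.log r) := by
  rw [Complex.cpow_def_of_ne_zero (by exact_mod_cast hr.ne'), Complex.ofReal_log hr.le, mul_comm]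

lemma cov_pointwise (ν : ℂ) {x : ℝ} (hx : 0 < x) :
    |2 * x / (1 + x ^ 2) ^ 2| •
        ((((x ^ 2 / (1 + x ^ 2)) : ℝ) : ℂ) ^ ((1:ℂ)/2 - 1) *
          (1 - (((x ^ 2 / (1 + x ^ 2)) : ℝ) : ℂ)) ^ (ν/2 - 1))
      = 2 * ((1 + x ^ 2 : ℝ) : ℂ) ^ (-(1 + ν) / 2) := by
  have ha : (0:ℝ) < 1 + x ^ 2 := by positivity
  set Lx : ℝ := Real.log x with hLx
  set La : ℝ := Real.log (1 + x ^ 2) with hLa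
  have hane : ((1 + x ^ 2 : ℝ) : ℂ) ≠ 0 := by exact_mod_cast ha.ne'
  have h1 : (1 : ℂ) - (((x ^ 2 / (1 + x ^ 2)) : ℝ) : ℂ) = (((1 + x^2)⁻¹ : ℝ) : ℂ) := by
    push_cast
    have h : (1 + (x:ℂ) ^ 2) ≠ 0 := by push_cast at hane; exact hane
    field_simp
    ring
  have hq : (0:ℝ) < x ^ 2 / (1 + x ^ 2) := by positivity
  have e1 : (((x ^ 2 / (1 + x ^ 2)) : ℝ) : ℂ) ^ ((1:ℂ)/2 - 1)
      = Complex.exp (((1:ℂ)/2 - 1) * ((2 * Lx - La : ℝ) : ℂ)) := by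
    rw [cpow_pos_exp hq]
    congr 2
    rw [Real.log_div (by positivity) ha.ne', Real.log_pow]
    push_cast [hLx, hLa]; ring
  have e2 : ((((1 + x^2)⁻¹ : ℝ)) : ℂ) ^ (ν/2 - 1)
      = Complex.exp ((ν/2 - 1) * ((-La : ℝ) : ℂ)) := by
    rw [cpow_pos_exp (by positivity)]
    congr 2
    rw [Real.log_inv]
  have e3 : ((|2 * x / (1 + x ^ 2) ^ 2| : ℝ) : ℂ)
      = 2 * Complex.exp ((Lx : ℂ)) * Complex.exp (((-2 * La : ℝ) : ℂ)) := by
    have : |2 * x / (1 + x ^ 2) ^ 2| = 2 * Real.exp Lx * Real.exp (-2 * La) := by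
      rw [abs_of_pos (by positivity), Real.exp_log hx]
      have : Real.exp (-2 * La) = ((1 + x^2) * (1 + x^2))⁻¹ := by
        have : (-2 : ℝ) * La = -(La + La) := by ring
        rw [this, Real.exp_neg, Real.exp_add, Real.exp_log ha]
      rw [this]; field_simp
    rw [this]
    push_cast [Complex.ofReal_exp]
    ring
  rw [Complex.real_smul, h1, e1, e2, e3, cpow_pos_exp ha, ← hLa]
  have key : ∀ A B : ℂ, 2 * Complex.exp (Lx:ℂ) * Complex.exp ((-2*La : ℝ):ℂ) *
      (Complex.exp A * Complex.exp B)
      = 2 * Complex.exp ((Lx:ℂ) + ((-2*La : ℝ):ℂ) + A + B) := by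
    intro A B
    rw [Complex.exp_add, Complex.exp_add, Complex.exp_add]; ring
  rw [key]
  congr 1
  push_cast
  ring

lemma image_sq_div : (fun x : ℝ => x ^ 2 / (1 + x ^ 2)) '' Ioi 0 = Ioo 0 1 := by
  ext t
  constructor
  · rintro ⟨x, hx, rfl⟩
    have hx' : (0:ℝ) < x := hx
    constructor
    · positivity
    · rw [div_lt_one (by positivity)]; linarith
  · rintro ⟨ht0, ht1⟩
    refine ⟨Real.sqrt (t / (1 - t)), ?_, ?_⟩
    · have : (0:ℝ) < t / (1 - t) := div_pos ht0 (by linarith)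
      exact Real.sqrt_pos.mpr this
    · have h1t : (0:ℝ) < 1 - t := by linarith
      simp only
      rw [Real.sq_sqrt (le_of_lt (div_pos ht0 h1t))]
      rw [div_eq_iff (show (0:ℝ) < 1 + t / (1 - t) by positivity).ne']
      field_simp
      ring

lemma hasDeriv_sq_div {x : ℝ} :
    HasDerivAt (fun x : ℝ => x ^ 2 / (1 + x ^ 2)) (2 * x / (1 + x ^ 2) ^ 2) x := by
  have ha : (1 + x ^ 2) ≠ 0 := by positivity
  have := (hasDerivAt_pow 2 x).fun_div ((hasDerivAt_const x 1).fun_add (hasDerivAt_pow 2 x)) ha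
  refine this.congr_deriv ?_
  field_simp
  ring

lemma injOn_sq_div : InjOn (fun x : ℝ => x ^ 2 / (1 + x ^ 2)) (Ioi 0) := by
  intro x hx y hy h
  simp only [mem_Ioi] at hx hy
  have hx1 : (0:ℝ) < 1 + x ^ 2 := by positivity
  have hy1 : (0:ℝ) < 1 + y ^ 2 := by positivity
  rw [div_eq_div_iff hx1.ne' hy1.ne'] at h
  have hxy : x ^ 2 = y ^ 2 := by nlinarith
  have := abs_eq_abs.2 (Or.inl (by nlinarith : x = y))
  nlinarith [sq_abs x, sq_abs y]

lemma cov_beta (ν : ℂ) :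
    ∫ t in Ioo (0:ℝ) 1, ((t : ℂ) ^ ((1:ℂ)/2 - 1) * (1 - (t : ℂ)) ^ (ν/2 - 1))
      = 2 * ∫ x in Ioi (0:ℝ), ((1 + x ^ 2 : ℝ) : ℂ) ^ (-(1 + ν) / 2) := by
  rw [← image_sq_div]
  rw [integral_image_eq_integral_abs_deriv_smul measurableSet_Ioi
    (fun x _ => hasDeriv_sq_div.hasDerivWithinAt) injOn_sq_div]
  rw [← MeasureTheory.integral_const_mul]
  refine setIntegral_congr_fun measurableSet_Ioi fun x hx => ?_
  have := cov_pointwise ν (show 0 < x from hx)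
  simpa using this

lemma continuous_cpow_one_add_sq (w : ℂ) :
    Continuous fun x : ℝ => ((1 + x ^ 2 : ℝ) : ℂ) ^ w := by
  have h : ∀ x : ℝ, ((1 + x ^ 2 : ℝ) : ℂ) ^ w
      = Complex.exp (w * ((Real.log (1 + x ^ 2) : ℝ) : ℂ)) := fun x =>
    cpow_pos_exp (by positivity) w
  simp only [h]
  exact Complex.continuous_exp.comp (continuous_const.mul (Complex.continuous_ofReal.comp
    (((continuous_const.add (continuous_pow 2)).log (fun x => by simp only [Pi.add_apply]; positivity)))))

lemma integrable_cpow_one_add_sq {w : ℂ} (hw : w.re < -(1/2)) :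
    Integrable fun x : ℝ => ((1 + x ^ 2 : ℝ) : ℂ) ^ w := by
  refine Integrable.mono' (integrable_one_add_sq_rpow hw)
    (continuous_cpow_one_add_sq w).aestronglyMeasurable ?_
  filter_upwards with x
  rw [Complex.norm_cpow_eq_rpow_re_of_pos (by positivity)]

lemma integral_univ_eq_two_Ioi {w : ℂ} (hw : w.re < -(1/2)) :
    ∫ x : ℝ, ((1 + x ^ 2 : ℝ) : ℂ) ^ w
      = 2 * ∫ x in Ioi (0:ℝ), ((1 + x ^ 2 : ℝ) : ℂ) ^ w := by
  set F : ℝ → ℂ := fun x => ((1 + x ^ 2 : ℝ) : ℂ) ^ w with hF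
  have hint := integrable_cpow_one_add_sq hw
  have h1 : (∫ x in Iic (0:ℝ), F x) + ∫ x in Ioi (0:ℝ), F x = ∫ x, F x :=
    intervalIntegral.integral_Iic_add_Ioi hint.integrableOn hint.integrableOn
  have hFe : ∀ x : ℝ, F (-x) = F x := by
    intro x
    show ((1 + (-x) ^ 2 : ℝ) : ℂ) ^ w = ((1 + x ^ 2 : ℝ) : ℂ) ^ w
    rw [neg_sq]
  have h1' : ∫ x in Iic (0:ℝ), F x = ∫ x in Ioi (0:ℝ), F x := by
    calc ∫ x in Iic (0:ℝ), F x = ∫ x in Iic (0:ℝ), F (-x) :=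
          (setIntegral_congr_fun measurableSet_Iic fun x _ => (hFe x).symm)
      _ = ∫ x in Ioi (0:ℝ), F x := by
          simpa using integral_comp_neg_Iic (0:ℝ) F
  rw [← h1, h1']
  ring

lemma integral_univ_one_add_sq_cpow {ν : ℂ} (hν : 0 < ν.re) :
    ∫ x : ℝ, ((1 + x ^ 2 : ℝ) : ℂ) ^ (-(1 + ν) / 2)
      = (2:ℂ) ^ (1 - ν) * (Real.pi : ℂ) * Complex.Gamma ν / Complex.Gamma ((1 + ν)/2) ^ 2 := by
  have hre : (-(1 + ν) / 2).re < -(1/2) := by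
    rw [re_div_two, Complex.neg_re, Complex.add_re, Complex.one_re]
    linarith
  rw [integral_univ_eq_two_Ioi hre, ← cov_beta ν]
  have hbeta : Complex.betaIntegral (1/2) (ν/2)
      = ∫ t in Ioo (0:ℝ) 1, ((t : ℂ) ^ ((1:ℂ)/2 - 1) * (1 - (t : ℂ)) ^ (ν/2 - 1)) := by
    rw [Complex.betaIntegral, intervalIntegral.integral_of_le zero_le_one,
      integral_Ioc_eq_integral_Ioo]
  rw [← hbeta]
  have hb := Complex.Gamma_mul_Gamma_eq_betaIntegral
    (show 0 < ((1:ℂ)/2).re by norm_num) (show 0 < ((ν:ℂ)/2).re by rw [re_div_two]; linarith)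
  have hdup := Complex.Gamma_mul_Gamma_add_half (ν/2)
  have hhalf : (ν/2 + 1/2 : ℂ) = (1 + ν)/2 := by ring
  have h2ν : (2 : ℂ) * (ν/2) = ν := by ring
  rw [hhalf, h2ν] at hdup
  have hX : Complex.Gamma ((1 + ν)/2) ≠ 0 :=
    Complex.Gamma_ne_zero_of_re_pos (by
      rw [re_div_two, Complex.add_re, Complex.one_re]; linarith)
  have hsqrt : Complex.Gamma (1/2 : ℂ) = ((Real.sqrt Real.pi : ℝ) : ℂ) := by
    rw [Complex.Gamma_one_half_eq,
      show ((1:ℂ)/2) = (((1/2 : ℝ)):ℂ) by norm_num,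
      ← Complex.ofReal_cpow Real.pi_pos.le]
    rw [show Real.sqrt Real.pi = Real.pi ^ (1/2 : ℝ) from Real.sqrt_eq_rpow _]
  have hpi : ((Real.sqrt Real.pi : ℝ) : ℂ) * ((Real.sqrt Real.pi : ℝ) : ℂ) = (Real.pi : ℂ) := by
    rw [← Complex.ofReal_mul, Real.mul_self_sqrt Real.pi_pos.le]
  have hadd : ((1:ℂ)/2 + ν/2) = (1 + ν)/2 := by ring
  rw [hadd, hsqrt] at hb
  rw [eq_div_iff (pow_ne_zero 2 hX)]
  have hG : Complex.betaIntegral (1/2) (ν/2) * Complex.Gamma ((1+ν)/2)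
      = ((Real.sqrt Real.pi : ℝ) : ℂ) * Complex.Gamma (ν/2) := by
    rw [hb]; ring
  calc Complex.betaIntegral (1/2) (ν/2) * Complex.Gamma ((1 + ν)/2) ^ 2
      = (Complex.betaIntegral (1/2) (ν/2) * Complex.Gamma ((1+ν)/2)) *
        Complex.Gamma ((1+ν)/2) := by ring
    _ = ((Real.sqrt Real.pi : ℝ) : ℂ) * (Complex.Gamma (ν/2) * Complex.Gamma ((1+ν)/2)) := by
        rw [hG]; ring
    _ = ((Real.sqrt Real.pi : ℝ) : ℂ) *
        (Complex.Gamma ν * (2:ℂ) ^ (1 - ν) * ((Real.sqrt Real.pi : ℝ) : ℂ)) := by rw [hdup]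
    _ = (2:ℂ) ^ (1 - ν) * (Real.pi : ℂ) * Complex.Gamma ν := by
        rw [← mul_assoc]
        linear_combination (2:ℂ) ^ (1 - ν) * Complex.Gamma ν * hpi

lemma sqrt_mul_cpow {a : ℝ} (ha : 0 < a) (Q : ℂ) :
    ((Real.sqrt a : ℝ) : ℂ) * (a : ℂ) ^ Q = (a : ℂ) ^ (Q + 1/2) := by
  have h1 : ((Real.sqrt a : ℝ) : ℂ) = Complex.exp (((Real.log a / 2 : ℝ)) : ℂ) := by
    rw [← Complex.ofReal_exp]
    norm_cast
    rw [← Real.log_sqrt ha.le, Real.exp_log (Real.sqrt_pos.mpr ha)]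
  rw [h1, cpow_pos_exp ha, cpow_pos_exp ha, ← Complex.exp_add]
  congr 1
  push_cast
  ring

lemma shift_sq_cpow {a : ℝ} (ha : 0 < a) (Q : ℂ) (y : ℝ) :
    ((a + y ^ 2 : ℝ) : ℂ) ^ Q
      = (a : ℂ) ^ Q * ((1 + (y / Real.sqrt a) ^ 2 : ℝ) : ℂ) ^ Q := by
  have hb : (0:ℝ) < 1 + (y / Real.sqrt a) ^ 2 := by positivity
  have hsq : (y / Real.sqrt a) ^ 2 = y ^ 2 / a := by
    rw [div_pow, Real.sq_sqrt ha.le]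
  have hprod : a + y ^ 2 = a * (1 + (y / Real.sqrt a) ^ 2) := by
    rw [hsq]; field_simp
  rw [hprod, cpow_pos_exp (by positivity), cpow_pos_exp ha, cpow_pos_exp hb,
    Real.log_mul ha.ne' hb.ne', ← Complex.exp_add]
  congr 1
  push_cast
  ring

lemma inner_integrable {a : ℝ} (ha : 0 < a) {Q : ℂ} (hQ : Q.re < -(1/2)) :
    Integrable fun y : ℝ => ((a + y ^ 2 : ℝ) : ℂ) ^ Q := by
  have hc : Real.sqrt a ≠ 0 := (Real.sqrt_pos.mpr ha).ne'
  have h1 : Integrable fun y : ℝ => ((1 + ((Real.sqrt a)⁻¹ * y) ^ 2 : ℝ) : ℂ) ^ Q :=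
    (integrable_cpow_one_add_sq hQ).comp_mul_left' (inv_ne_zero hc)
  have h2 := h1.const_mul ((a : ℂ) ^ Q)
  refine h2.congr (Filter.Eventually.of_forall fun y => ?_)
  show (a:ℂ) ^ Q * ((1 + ((Real.sqrt a)⁻¹ * y) ^ 2 : ℝ) : ℂ) ^ Q = ((a + y ^ 2 : ℝ) : ℂ) ^ Q
  rw [shift_sq_cpow ha Q y, div_eq_inv_mul]

lemma inner_integral_eq {a : ℝ} (ha : 0 < a) (Q : ℂ) :
    ∫ y : ℝ, ((a + y ^ 2 : ℝ) : ℂ) ^ Q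
      = (a : ℂ) ^ (Q + 1/2) * ∫ x : ℝ, ((1 + x ^ 2 : ℝ) : ℂ) ^ Q := by
  have hc : (0:ℝ) < Real.sqrt a := Real.sqrt_pos.mpr ha
  have key := Measure.integral_comp_mul_left
    (fun y : ℝ => ((a + y ^ 2 : ℝ) : ℂ) ^ Q) (Real.sqrt a)
  have hptw : ∀ x : ℝ, ((a + (Real.sqrt a * x) ^ 2 : ℝ) : ℂ) ^ Q
      = (a : ℂ) ^ Q * ((1 + x ^ 2 : ℝ) : ℂ) ^ Q := by
    intro x
    rw [shift_sq_cpow ha Q (Real.sqrt a * x), mul_comm (Real.sqrt a) x,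
      mul_div_assoc, div_self hc.ne', mul_one]
  simp only [hptw] at key
  rw [MeasureTheory.integral_const_mul] at key
  have habs : |(Real.sqrt a)⁻¹| = (Real.sqrt a)⁻¹ := abs_of_pos (by positivity)
  rw [habs] at key
  -- key : a^Q * ∫ (1+x²)^Q = (√a)⁻¹ • ∫ (a+y²)^Q
  have := congrArg (fun z => ((Real.sqrt a : ℝ) : ℂ) * z) key
  simp only [Complex.real_smul] at this
  have h2 : ((Real.sqrt a : ℝ) : ℂ) * (((Real.sqrt a)⁻¹ : ℝ) : ℂ) = 1 := by
    rw [← Complex.ofReal_mul, mul_inv_cancel₀ hc.ne', Complex.ofReal_one]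
  rw [← sqrt_mul_cpow ha Q, mul_assoc, this, ← mul_assoc, h2, one_mul]

lemma re_osc (t : ℝ) : (2 * (Real.pi : ℂ) * Complex.I * (t : ℂ)).re = 0 := by
  simp [Complex.mul_re, Complex.mul_im]

lemma norm_osc (t : ℝ) : ‖Complex.exp (2 * (Real.pi : ℂ) * Complex.I * (t : ℂ))‖ = 1 := by
  rw [Complex.norm_exp, re_osc, Real.exp_zero]

lemma norm_cpow_pos {r : ℝ} (hr : 0 < r) (w : ℂ) : ‖(r : ℂ) ^ w‖ = r ^ w.re := by
  rw [Complex.norm_cpow_eq_rpow_re_of_pos hr]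

lemma sqrt_mul_rpow {a : ℝ} (ha : 0 < a) (q : ℝ) :
    Real.sqrt a * a ^ q = a ^ (q + 1/2) := by
  rw [Real.sqrt_eq_rpow, ← Real.rpow_add ha]
  ring_nf

lemma inner_integral_norm {a : ℝ} (ha : 0 < a) (q : ℝ) :
    ∫ y : ℝ, (a + y ^ 2) ^ q = a ^ (q + 1/2) * ∫ x : ℝ, (1 + x ^ 2) ^ q := by
  have hc : (0:ℝ) < Real.sqrt a := Real.sqrt_pos.mpr ha
  have key := Measure.integral_comp_mul_left
    (fun y : ℝ => (a + y ^ 2) ^ q) (Real.sqrt a)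
  have hptw : ∀ x : ℝ, (a + (Real.sqrt a * x) ^ 2) ^ q = a ^ q * (1 + x ^ 2) ^ q := by
    intro x
    have h1 : a + (Real.sqrt a * x) ^ 2 = a * (1 + x ^ 2) := by
      rw [mul_pow, Real.sq_sqrt ha.le]; ring
    rw [h1, Real.mul_rpow ha.le (by positivity)]
  simp only [hptw] at key
  rw [MeasureTheory.integral_const_mul, smul_eq_mul] at key
  have habs : |(Real.sqrt a)⁻¹| = (Real.sqrt a)⁻¹ := abs_of_pos (by positivity)
  rw [habs] at key
  have := congrArg (fun z => Real.sqrt a * z) key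
  simp only [← mul_assoc, mul_inv_cancel₀ hc.ne', one_mul] at this
  rw [← this, sqrt_mul_rpow ha q]

section Main

variable (μ₁ μ₂ μ₃ : ℂ) (n₂ : ℝ)

lemma f_eq (u : ℝ × ℝ) :
    ((Real.sqrt (1 + u.1 ^ 2) / (1 + u.1 ^ 2 + u.2 ^ 2) : ℝ) : ℂ) ^ (1 - μ₃) *
        ((Real.sqrt (1 + u.1 ^ 2 + u.2 ^ 2) / (1 + u.1 ^ 2) : ℝ) : ℂ) ^ (1 + μ₁) *
        Complex.exp (2 * (Real.pi : ℂ) * Complex.I * ((-n₂ * u.1 : ℝ) : ℂ))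
      = ((1 + u.1 ^ 2 : ℝ) : ℂ) ^ ((1 - μ₃)/2 - (1 + μ₁)) *
        ((1 + u.1 ^ 2 + u.2 ^ 2 : ℝ) : ℂ) ^ ((1 + μ₁)/2 - (1 - μ₃)) *
        Complex.exp (2 * (Real.pi : ℂ) * Complex.I * ((-n₂ * u.1 : ℝ) : ℂ)) := by
  have ha : (0:ℝ) < 1 + u.1 ^ 2 := by positivity
  have hb : (0:ℝ) < 1 + u.1 ^ 2 + u.2 ^ 2 := by positivity
  congr 1
  set La := Real.log (1 + u.1 ^ 2) with hLa
  set Lb := Real.log (1 + u.1 ^ 2 + u.2 ^ 2) with hLb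
  have e1 : Real.log (Real.sqrt (1 + u.1 ^ 2) / (1 + u.1 ^ 2 + u.2 ^ 2)) = La/2 - Lb := by
    rw [Real.log_div (Real.sqrt_pos.mpr ha).ne' hb.ne', Real.log_sqrt ha.le]
  have e2 : Real.log (Real.sqrt (1 + u.1 ^ 2 + u.2 ^ 2) / (1 + u.1 ^ 2)) = Lb/2 - La := by
    rw [Real.log_div (Real.sqrt_pos.mpr hb).ne' ha.ne', Real.log_sqrt hb.le]
  rw [cpow_pos_exp (div_pos (Real.sqrt_pos.mpr ha) hb),
    cpow_pos_exp (div_pos (Real.sqrt_pos.mpr hb) ha),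
    cpow_pos_exp ha, cpow_pos_exp hb, e1, e2, ← Complex.exp_add, ← Complex.exp_add]
  congr 1
  push_cast
  ring

lemma cont_PQE (P Q : ℂ) :
    Continuous (fun u : ℝ × ℝ => ((1 + u.1 ^ 2 : ℝ) : ℂ) ^ P *
      ((1 + u.1 ^ 2 + u.2 ^ 2 : ℝ) : ℂ) ^ Q *
      Complex.exp (2 * (Real.pi : ℂ) * Complex.I * ((-n₂ * u.1 : ℝ) : ℂ))) := by
  have h : ∀ u : ℝ × ℝ, ((1 + u.1 ^ 2 : ℝ) : ℂ) ^ P *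
      ((1 + u.1 ^ 2 + u.2 ^ 2 : ℝ) : ℂ) ^ Q *
      Complex.exp (2 * (Real.pi : ℂ) * Complex.I * ((-n₂ * u.1 : ℝ) : ℂ))
      = Complex.exp (P * ((Real.log (1 + u.1 ^ 2) : ℝ) : ℂ)) *
        Complex.exp (Q * ((Real.log (1 + u.1 ^ 2 + u.2 ^ 2) : ℝ) : ℂ)) *
        Complex.exp (2 * (Real.pi : ℂ) * Complex.I * ((-n₂ * u.1 : ℝ) : ℂ)) := by
    intro u
    rw [cpow_pos_exp (by positivity), cpow_pos_exp (by positivity)]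
  simp only [h]
  have c1 : Continuous fun u : ℝ × ℝ => (1 + u.1 ^ 2 : ℝ) := by continuity
  have c2 : Continuous fun u : ℝ × ℝ => (1 + u.1 ^ 2 + u.2 ^ 2 : ℝ) := by continuity
  refine Continuous.mul (Continuous.mul ?_ ?_) ?_
  · exact Complex.continuous_exp.comp (continuous_const.mul
      (Complex.continuous_ofReal.comp (c1.log fun u => by positivity)))
  · exact Complex.continuous_exp.comp (continuous_const.mul
      (Complex.continuous_ofReal.comp (c2.log fun u => by positivity)))
  · exact Complex.continuous_exp.comp (continuous_const.mul
      (Complex.continuous_ofReal.comp (by continuity)))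

end Main


/-- The spherical degenerate Whittaker function at the Weyl element `w₄` factors as
`𝒲₀(0,μ₂−μ₃)·𝒲₀(n₂,μ₁−μ₃)`; both integrals converge absolutely. Here
`u = (u₂, u₃)` and `e(t) = exp(2πit)`. -/
theorem stmt_16 (μ₁ μ₂ μ₃ : ℂ) (hsum : μ₁ + μ₂ + μ₃ = 0)
    (h23 : 0 < (μ₂ - μ₃).re) (h13 : 0 < (μ₁ - μ₃).re) (n₂ : ℝ) :
    let f : ℝ × ℝ → ℂ := fun u =>
      ((Real.sqrt (1 + u.1 ^ 2) / (1 + u.1 ^ 2 + u.2 ^ 2) : ℝ) : ℂ) ^ (1 - μ₃) *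
        ((Real.sqrt (1 + u.1 ^ 2 + u.2 ^ 2) / (1 + u.1 ^ 2) : ℝ) : ℂ) ^ (1 + μ₁) *
        Complex.exp (2 * (Real.pi : ℂ) * Complex.I * ((-n₂ * u.1 : ℝ) : ℂ))
    let g : ℝ → ℂ := fun x =>
      ((1 + x ^ 2 : ℝ) : ℂ) ^ (-(1 + μ₁ - μ₃) / 2) *
        Complex.exp (2 * (Real.pi : ℂ) * Complex.I * ((-n₂ * x : ℝ) : ℂ))
    Integrable f ∧ Integrable g ∧
      (∫ u : ℝ × ℝ, f u)
        = ((2 : ℂ) ^ (1 - (μ₂ - μ₃)) * (Real.pi : ℂ) * Complex.Gamma (μ₂ - μ₃) /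
            Complex.Gamma ((1 + μ₂ - μ₃) / 2) ^ 2) * ∫ x : ℝ, g x := by
  intro f g
  set P : ℂ := (1 - μ₃)/2 - (1 + μ₁) with hP
  set Q : ℂ := (1 + μ₁)/2 - (1 - μ₃) with hQ
  set E : ℝ → ℂ := fun t => Complex.exp (2 * (Real.pi : ℂ) * Complex.I * ((-n₂ * t : ℝ) : ℂ))
    with hE
  have hfeq : ∀ u : ℝ × ℝ, f u = ((1 + u.1 ^ 2 : ℝ) : ℂ) ^ P *
      ((1 + u.1 ^ 2 + u.2 ^ 2 : ℝ) : ℂ) ^ Q * E u.1 := fun u => f_eq μ₁ μ₃ n₂ u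
  -- real parts
  have hQre : Q.re < -(1/2) := by
    have : Q = -(1 + (μ₂ - μ₃))/2 := by rw [hQ]; linear_combination hsum / 2
    rw [this]
    have : (-(1 + (μ₂ - μ₃))/2).re = -(1 + (μ₂ - μ₃).re)/2 := by
      rw [re_div_two]; simp [Complex.neg_re, Complex.add_re]
    rw [this]; linarith
  have hGre : ((-(1 + μ₁ - μ₃)/2) : ℂ).re < -(1/2) := by
    have : ((-(1 + μ₁ - μ₃)/2) : ℂ).re = -(1 + (μ₁ - μ₃).re)/2 := by
      rw [re_div_two]; simp [Complex.neg_re, Complex.add_re, Complex.sub_re]; ring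
    rw [this]; linarith
  have hPQhalf : P + (Q + 1/2) = -(1 + μ₁ - μ₃)/2 := by rw [hP, hQ]; ring
  -- norm of f
  have hnorm : ∀ u : ℝ × ℝ, ‖f u‖ = (1 + u.1 ^ 2) ^ P.re * (1 + u.1 ^ 2 + u.2 ^ 2) ^ Q.re := by
    intro u
    have ha : (0:ℝ) < 1 + u.1 ^ 2 := by positivity
    have hb : (0:ℝ) < 1 + u.1 ^ 2 + u.2 ^ 2 := by positivity
    rw [hfeq u, norm_mul, norm_mul, norm_cpow_pos ha, norm_cpow_pos hb, hE, norm_osc, mul_one]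
  -- continuity / measurability
  have hcont : Continuous f := by
    have := cont_PQE n₂ P Q
    refine Continuous.congr this fun u => (hfeq u).symm
  -- integrability of f
  have hIf : Integrable f := by
    refine (integrable_prod_iff hcont.aestronglyMeasurable).2 ⟨?_, ?_⟩
    · refine Filter.Eventually.of_forall fun x => ?_
      have ha : (0:ℝ) < 1 + x ^ 2 := by positivity
      have hIy : Integrable fun y : ℝ => (((1 + x ^ 2 : ℝ) : ℂ) ^ P *
          (((1 + x ^ 2) + y ^ 2 : ℝ) : ℂ) ^ Q) * E x :=
        (((inner_integrable ha hQre).const_mul _).mul_const _)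
      have hxy : (fun y : ℝ => f (x, y)) = fun y : ℝ => (((1 + x ^ 2 : ℝ) : ℂ) ^ P *
          (((1 + x ^ 2) + y ^ 2 : ℝ) : ℂ) ^ Q) * E x := by
        funext y
        have := hfeq (x, y)
        simpa [mul_assoc] using this
      rw [hxy]
      exact hIy
    · have hval : ∀ x : ℝ, (∫ y : ℝ, ‖f (x, y)‖)
          = ((1 + x ^ 2) ^ (P.re + (Q.re + 1/2))) * ∫ t : ℝ, (1 + t ^ 2) ^ Q.re := by
        intro x
        have ha : (0:ℝ) < 1 + x ^ 2 := by positivity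
        have hn : (fun y : ℝ => ‖f (x, y)‖)
            = fun y : ℝ => (1 + x ^ 2) ^ P.re * ((1 + x ^ 2) + y ^ 2) ^ Q.re := by
          funext y
          exact hnorm (x, y)
        rw [hn, MeasureTheory.integral_const_mul, inner_integral_norm ha Q.re, ← mul_assoc,
          ← Real.rpow_add ha]
      have hlt : P.re + (Q.re + 1/2) < -(1/2) := by
        have h1 : P.re + (Q.re + 1/2) = ((-(1 + μ₁ - μ₃)/2) : ℂ).re := by
          rw [← hPQhalf, Complex.add_re, Complex.add_re]
          norm_num
        rw [h1]; exact hGre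
      have : Integrable fun x : ℝ =>
          ((1 + x ^ 2) ^ (P.re + (Q.re + 1/2))) * ∫ t : ℝ, (1 + t ^ 2) ^ Q.re :=
        (integrable_one_add_sq_rpow hlt).mul_const _
      refine this.congr (Filter.Eventually.of_forall fun x => ?_)
      exact (hval x).symm
  -- integrability of g
  have hIg : Integrable g := by
    refine Integrable.mono' (integrable_one_add_sq_rpow hGre)
      ?_ (Filter.Eventually.of_forall fun x => ?_)
    · have : Continuous g := by
        refine (continuous_cpow_one_add_sq _).mul ?_
        exact Complex.continuous_exp.comp (continuous_const.mul
          (Complex.continuous_ofReal.comp (by continuity)))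
      exact this.aestronglyMeasurable
    · show ‖((1 + x ^ 2 : ℝ) : ℂ) ^ (-(1 + μ₁ - μ₃)/2) * E x‖ ≤ _
      rw [norm_mul, norm_cpow_pos (by positivity), hE, norm_osc, mul_one]
  refine ⟨hIf, hIg, ?_⟩
  -- value
  have hQnu : Q = -(1 + (μ₂ - μ₃))/2 := by rw [hQ]; linear_combination hsum / 2
  calc ∫ u : ℝ × ℝ, f u
      = ∫ x : ℝ, ∫ y : ℝ, f (x, y) := MeasureTheory.integral_prod f hIf
    _ = ∫ x : ℝ, (∫ t : ℝ, ((1 + t ^ 2 : ℝ) : ℂ) ^ Q) *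
          (((1 + x ^ 2 : ℝ) : ℂ) ^ (-(1 + μ₁ - μ₃)/2) * E x) := by
        refine integral_congr_ae (Filter.Eventually.of_forall fun x => ?_)
        beta_reduce
        have ha : (0:ℝ) < 1 + x ^ 2 := by positivity
        have h1 : (fun y : ℝ => f (x, y)) = fun y : ℝ => (((1 + x ^ 2 : ℝ) : ℂ) ^ P *
            (((1 + x ^ 2) + y ^ 2 : ℝ) : ℂ) ^ Q) * E x := by
          funext y
          have := hfeq (x, y)
          simpa [mul_assoc] using this
        rw [h1, MeasureTheory.integral_mul_const, MeasureTheory.integral_const_mul,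
          inner_integral_eq ha Q]
        rw [← mul_assoc, ← Complex.cpow_add _ _ (by exact_mod_cast ha.ne'), hPQhalf]
        ring
    _ = (∫ t : ℝ, ((1 + t ^ 2 : ℝ) : ℂ) ^ Q) * ∫ x : ℝ, g x := by
        rw [MeasureTheory.integral_const_mul]
    _ = ((2 : ℂ) ^ (1 - (μ₂ - μ₃)) * (Real.pi : ℂ) * Complex.Gamma (μ₂ - μ₃) /
          Complex.Gamma ((1 + μ₂ - μ₃) / 2) ^ 2) * ∫ x : ℝ, g x := by
        congr 1
        rw [hQnu, integral_univ_one_add_sq_cpow h23,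
          show (1 + μ₂ - μ₃ : ℂ) = 1 + (μ₂ - μ₃) from by ring]
end
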